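/- Let p : Fin m → ℕ be positive processing times and let τ be a schedule that orders the jobs in nondecreasing processing time (i.e., τ(i) < τ(j) implies p(i) ≤ p(j)). Then for every schedule τ', ∑_i C_i(τ) ≤ ∑_i C_i(τ'). Consequently, for any profile (σ₁,…,σ_n) of preferred schedules, such a schedule τ minimizes the total lateness ∑_{a=1}^{n} L(τ, σ_a) over all schedules. -/
import Mathlib


/-- Completion time of job `i` in schedule `τ` with processing times `p`. -/
def completionTime {m : ℕ} (p : Fin m → ℕ) (τ : Equiv.Perm (Fin m)) (i : Fin m) : ℕ :=
  ∑ j ∈ Finset.univ.filter (fun j => τ j ≤ τ i), p j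

lemma sum_completionTime {m : ℕ} (p : Fin m → ℕ) (τ' : Equiv.Perm (Fin m)) :
    ∑ i : Fin m, completionTime p τ' i
      = ∑ k : Fin m, (m - (k : ℕ)) * p (τ'.symm k) := by
  have h1 : ∑ i : Fin m, completionTime p τ' i
      = ∑ j : Fin m, (m - (τ' j : ℕ)) * p j := by
    unfold completionTime
    simp only [Finset.sum_filter]
    rw [Finset.sum_comm]
    refine Finset.sum_congr rfl fun j _ => ?_
    rw [← Finset.sum_filter, Finset.sum_const, smul_eq_mul]
    · congr 1
      have : (Finset.univ.filter fun i : Fin m => τ' j ≤ τ' i).card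
          = (Finset.univ.filter fun k : Fin m => τ' j ≤ k).card := by
        apply Finset.card_nbij (fun i => τ' i)
        · intro a ha; simpa using (by simpa using ha : τ' j ≤ τ' a)
        · intro a ha b hb hab; exact τ'.injective hab
        · intro k hk
          refine ⟨τ'.symm k, ?_, by simp⟩
          simpa using (by simpa using hk : τ' j ≤ k)
      rw [this]
      have : (Finset.univ.filter fun k : Fin m => τ' j ≤ k) = Finset.Ici (τ' j) := by
        ext k; simp
      rw [this, Fin.card_Ici]
  rw [h1, ← Equiv.sum_comp τ'.symm (fun j => (m - (τ' j : ℕ)) * p j)]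
  simp

theorem spt_minimizes_total_lateness (m : ℕ) (p : Fin m → ℕ) (hp : ∀ i, 0 < p i)
    (τ : Equiv.Perm (Fin m)) (hτ : ∀ i j : Fin m, τ i < τ j → p i ≤ p j) :
    (∀ τ' : Equiv.Perm (Fin m),
      ∑ i : Fin m, completionTime p τ i ≤ ∑ i : Fin m, completionTime p τ' i) ∧
    (∀ (n : ℕ) (σs : Fin n → Equiv.Perm (Fin m)) (τ' : Equiv.Perm (Fin m)),
      ∑ a : Fin n, ∑ i : Fin m,
          ((completionTime p τ i : ℤ) - (completionTime p (σs a) i : ℤ))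
        ≤ ∑ a : Fin n, ∑ i : Fin m,
            ((completionTime p τ' i : ℤ) - (completionTime p (σs a) i : ℤ))) := by
  have key : ∀ τ' : Equiv.Perm (Fin m),
      ∑ i : Fin m, completionTime p τ i ≤ ∑ i : Fin m, completionTime p τ' i := by
    intro τ'
    rw [sum_completionTime, sum_completionTime]
    set f : Fin m → ℕ := fun k => m - (k : ℕ) with hf
    set g : Fin m → ℕ := fun k => p (τ.symm k) with hg
    have hanti : Antivary f g := by
      intro i j hij
      have hle : i ≤ j := by
        by_contra hlt
        push_neg at hlt
        have := hτ (τ.symm j) (τ.symm i) (by simpa using hlt)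
        simp only [hg] at hij
        omega
      simp only [hf]
      have := Fin.le_iff_val_le_val.mp hle
      omega
    have := hanti.sum_mul_le_sum_mul_comp_perm (σ := τ'.symm.trans τ)
    calc ∑ k : Fin m, f k * p (τ.symm k) = ∑ k : Fin m, f k * g k := rfl
      _ ≤ ∑ k : Fin m, f k * g ((τ'.symm.trans τ) k) := this
      _ = ∑ k : Fin m, f k * p (τ'.symm k) := by
          refine Finset.sum_congr rfl fun k _ => ?_
          simp [hg, Equiv.trans_apply]
  refine ⟨key, fun n σs τ' => ?_⟩
  refine Finset.sum_le_sum fun a _ => ?_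
  rw [Finset.sum_sub_distrib, Finset.sum_sub_distrib]
  refine sub_le_sub_right ?_ _
  exact_mod_cast Nat.cast_le.mpr (key τ')
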